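/- Let f : {-1,1}^n → {-1,1} and j ∈ [n], and suppose I_i(f) ≤ ε/n for all i ≠ j. Then there exists a function g of the single coordinate x_j such that P[f(x) ≠ g(x_j)] ≤ 2ε. -/

import Mathlib

open Finset

/-- Voter `i` is pivotal for `f` at input `x`. -/
def PivotalAt {n : ℕ} (f : (Fin n → Bool) → Bool) (i : Fin n) (x : Fin n → Bool) : Prop :=
  f (Function.update x i true) ≠ f (Function.update x i false)

instance {n : ℕ} (f : (Fin n → Bool) → Bool) (i : Fin n) (x : Fin n → Bool) :
    Decidable (PivotalAt f i x) := by unfold PivotalAt; infer_instance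

/-- The influence of voter `i` on `f`. -/
noncomputable def influence {n : ℕ} (f : (Fin n → Bool) → Bool) (i : Fin n) : ℝ :=
  ((Finset.univ.filter fun x : Fin n → Bool => PivotalAt f i x).card : ℝ) / 2^n

lemma card_split (m : ℕ) (p : (Fin (m+1) → Bool) → Prop) [DecidablePred p] :
    (Finset.univ.filter p).card
      = (Finset.univ.filter fun z : Fin m → Bool => p (Fin.snoc z false)).card
      + (Finset.univ.filter fun z : Fin m → Bool => p (Fin.snoc z true)).card := by
  classical
  let e : (Fin m → Bool) × Bool ≃ (Fin (m+1) → Bool) :=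
    { toFun := fun zb => Fin.snoc zb.1 zb.2
      invFun := fun x => (Fin.init x, x (Fin.last m))
      left_inv := fun zb => by simp [Fin.init_snoc, Fin.snoc_last]
      right_inv := fun x => by simp [Fin.snoc_init_self] }
  have h := Fintype.sum_equiv e (fun zb => if p (Fin.snoc zb.1 zb.2) then 1 else 0)
      (fun x => if p x then 1 else 0) (fun zb => rfl)
  rw [Finset.card_filter, Finset.card_filter, Finset.card_filter, ← h,
    Fintype.sum_prod_type]
  simp only [Fintype.sum_bool]
  rw [Finset.sum_add_distrib]
  exact add_comm _ _

/-- Poincaré-type inequality, combinatorial nat version. -/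
lemma key (m : ℕ) (h : (Fin m → Bool) → Bool) :
    2 * min (Finset.univ.filter fun x => h x = true).card
        (Finset.univ.filter fun x => h x = false).card
      ≤ ∑ i, (Finset.univ.filter fun x => PivotalAt h i x).card := by
  classical
  induction m with
  | zero =>
    have h1 : (Finset.univ.filter fun x : Fin 0 → Bool => h x = true).card
        + (Finset.univ.filter fun x : Fin 0 → Bool => h x = false).card = 1 := by
      have := Finset.card_filter_add_card_filter_not
        (s := (Finset.univ : Finset (Fin 0 → Bool))) (p := fun x => h x = true)
      simp only [Finset.card_univ] at this
      simpa [Bool.not_eq_true] using this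
    omega
  | succ m ih =>
    set h0 : (Fin m → Bool) → Bool := fun z => h (Fin.snoc z false) with hh0
    set h1 : (Fin m → Bool) → Bool := fun z => h (Fin.snoc z true) with hh1
    set T0 := (Finset.univ.filter fun z => h0 z = true).card
    set F0 := (Finset.univ.filter fun z => h0 z = false).card
    set T1 := (Finset.univ.filter fun z => h1 z = true).card
    set F1 := (Finset.univ.filter fun z => h1 z = false).card
    set D := (Finset.univ.filter fun z => h0 z ≠ h1 z).card with hD
    -- splitting the T and F counts
    have hT : (Finset.univ.filter fun x => h x = true).card = T0 + T1 :=
      card_split m (fun x => h x = true)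
    have hF : (Finset.univ.filter fun x => h x = false).card = F0 + F1 :=
      card_split m (fun x => h x = false)
    -- each side sums to 2^m
    have hN0 : T0 + F0 = 2 ^ m := by
      have := Finset.card_filter_add_card_filter_not
        (s := (Finset.univ : Finset (Fin m → Bool))) (p := fun z => h0 z = true)
      simp only [Finset.card_univ] at this
      simpa [Bool.not_eq_true, T0, F0] using this
    have hN1 : T1 + F1 = 2 ^ m := by
      have := Finset.card_filter_add_card_filter_not
        (s := (Finset.univ : Finset (Fin m → Bool))) (p := fun z => h1 z = true)
      simp only [Finset.card_univ] at this
      simpa [Bool.not_eq_true, T1, F1] using this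
    -- |T0 - T1| ≤ D
    have hd1 : T0 ≤ T1 + D := by
      have hsub : (Finset.univ.filter fun z => h0 z = true)
          ⊆ (Finset.univ.filter fun z => h1 z = true)
            ∪ (Finset.univ.filter fun z => h0 z ≠ h1 z) := by
        intro z hz
        simp only [Finset.mem_filter, Finset.mem_univ, true_and] at hz
        simp only [Finset.mem_union, Finset.mem_filter, Finset.mem_univ, true_and]
        by_cases hc : h1 z = true
        · exact Or.inl hc
        · exact Or.inr (by simp [hz, hc])
      calc T0 ≤ _ := Finset.card_le_card hsub
        _ ≤ T1 + D := Finset.card_union_le _ _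
    have hd2 : T1 ≤ T0 + D := by
      have hsub : (Finset.univ.filter fun z => h1 z = true)
          ⊆ (Finset.univ.filter fun z => h0 z = true)
            ∪ (Finset.univ.filter fun z => h0 z ≠ h1 z) := by
        intro z hz
        simp only [Finset.mem_filter, Finset.mem_univ, true_and] at hz
        simp only [Finset.mem_union, Finset.mem_filter, Finset.mem_univ, true_and]
        by_cases hc : h0 z = true
        · exact Or.inl hc
        · exact Or.inr (by simp [hz, hc])
      calc T1 ≤ _ := Finset.card_le_card hsub
        _ ≤ T0 + D := Finset.card_union_le _ _
    -- pivotal sums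
    have hpiv : ∀ i : Fin m,
        (Finset.univ.filter fun x => PivotalAt h i.castSucc x).card
          = (Finset.univ.filter fun z => PivotalAt h0 i z).card
            + (Finset.univ.filter fun z => PivotalAt h1 i z).card := by
      intro i
      have e0 : ∀ (z : Fin m → Bool) (b : Bool),
          PivotalAt h i.castSucc (Fin.snoc z b) ↔
            h (Fin.snoc (Function.update z i true) b)
              ≠ h (Fin.snoc (Function.update z i false) b) := by
        intro z b
        unfold PivotalAt
        rw [Fin.snoc_update, Fin.snoc_update]
      have := card_split m (fun x => PivotalAt h i.castSucc x)
      rw [this]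
      congr 1 <;> apply Finset.card_bij (fun z _ => z) <;>
        simp_all [PivotalAt, h0, h1] <;> (intro a ha; exact Finset.mem_filter.mpr ⟨Finset.mem_univ _, ha⟩)
    have hlast : (Finset.univ.filter fun x => PivotalAt h (Fin.last m) x).card = 2 * D := by
      have e0 : ∀ (z : Fin m → Bool) (b : Bool),
          PivotalAt h (Fin.last m) (Fin.snoc z b) ↔ h0 z ≠ h1 z := by
        intro z b
        unfold PivotalAt
        rw [Fin.update_snoc_last, Fin.update_snoc_last]
        constructor
        · intro hne heq; exact hne (by simp [hh0, hh1] at heq ⊢; rw [heq])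
        · intro hne heq; exact hne (by simp [hh0, hh1] at heq ⊢; rw [heq])
      rw [card_split m (fun x => PivotalAt h (Fin.last m) x)]
      have c1 : (Finset.univ.filter fun z : Fin m → Bool =>
          PivotalAt h (Fin.last m) (Fin.snoc z false)).card = D := by
        apply Finset.card_bij (fun z _ => z) <;> simp_all
      have c2 : (Finset.univ.filter fun z : Fin m → Bool =>
          PivotalAt h (Fin.last m) (Fin.snoc z true)).card = D := by
        apply Finset.card_bij (fun z _ => z) <;> simp_all
      omega
    have hsum : ∑ i : Fin (m+1), (Finset.univ.filter fun x => PivotalAt h i x).card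
        = (∑ i : Fin m, (Finset.univ.filter fun z => PivotalAt h0 i z).card)
          + (∑ i : Fin m, (Finset.univ.filter fun z => PivotalAt h1 i z).card)
          + 2 * D := by
      rw [Fin.sum_univ_castSucc]
      rw [hlast, Finset.sum_congr rfl (fun i _ => hpiv i), Finset.sum_add_distrib]
    have ih0 := ih h0
    have ih1 := ih h1
    rw [hT, hF, hsum]
    omega

lemma update_self' {n : ℕ} (x : Fin n → Bool) (j : Fin n) : Function.update x j (x j) = x :=
  Function.update_eq_self j x

theorem stmt_10 (n : ℕ) (f : (Fin n → Bool) → Bool) (j : Fin n) (ε : ℝ) (hε : 0 ≤ ε)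
    (hinf : ∀ i : Fin n, i ≠ j → influence f i ≤ ε / n) :
    ∃ g : Bool → Bool,
      ((Finset.univ.filter fun x : Fin n → Bool => f x ≠ g (x j)).card : ℝ) / 2^n
        ≤ 2 * ε := by
  classical
  set fb : Bool → (Fin n → Bool) → Bool := fun b x => f (Function.update x j b) with hfb
  set T : Bool → ℕ := fun b => (Finset.univ.filter fun x => fb b x = true).card with hTdef
  set F : Bool → ℕ := fun b => (Finset.univ.filter fun x => fb b x = false).card with hFdef
  refine ⟨fun b => decide (F b ≤ T b), ?_⟩
  set g : Bool → Bool := fun b => decide (F b ≤ T b) with hg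
  -- pivotal count of fb at j is zero
  have hPj : ∀ b, (Finset.univ.filter fun x => PivotalAt (fb b) j x).card = 0 := by
    intro b
    rw [Finset.card_eq_zero, Finset.filter_eq_empty_iff]
    intro x _
    simp only [PivotalAt, hfb, Function.update_idem, ne_eq, not_not]
  -- pivotal count of fb at i ≠ j is at most twice that of f
  have hPi : ∀ b, ∀ i : Fin n, i ≠ j →
      (Finset.univ.filter fun x => PivotalAt (fb b) i x).card
        ≤ 2 * (Finset.univ.filter fun x => PivotalAt f i x).card := by
    intro b i hij
    have hmap : ∀ x, PivotalAt (fb b) i x → PivotalAt f i (Function.update x j b) := by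
      intro x hx
      have hx' : f (Function.update (Function.update x i true) j b)
          ≠ f (Function.update (Function.update x i false) j b) := hx
      unfold PivotalAt
      rw [Function.update_comm hij] at hx'
      rw [Function.update_comm hij] at hx'
      exact hx'
    have := Finset.card_le_card_of_injOn
      (f := fun x => ((Function.update x j b, x j) : (Fin n → Bool) × Bool))
      (s := Finset.univ.filter fun x => PivotalAt (fb b) i x)
      (t := (Finset.univ.filter fun x => PivotalAt f i x) ×ˢ Finset.univ)
      (fun x hx => by
        simp only [Finset.mem_coe, Finset.coe_filter, Set.mem_setOf_eq, Finset.mem_filter, Finset.mem_univ, true_and] at hx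
        simp only [Finset.mem_coe, Finset.mem_product, Finset.mem_filter, Finset.mem_univ, true_and,
          and_true]
        exact hmap x hx)
      (fun x _ y _ hxy => by
        simp only [Prod.mk.injEq] at hxy
        obtain ⟨h1, h2⟩ := hxy
        have : Function.update (Function.update x j b) j (x j)
            = Function.update (Function.update y j b) j (y j) := by rw [h1, h2]
        rwa [Function.update_idem, Function.update_idem, update_self', update_self'] at this)
    rwa [Finset.card_product, Finset.card_univ, Fintype.card_bool, mul_comm] at this
  -- min of T,F is attained by the disagreement with g
  have hmin : ∀ b, (Finset.univ.filter fun x => fb b x ≠ g b).card = min (T b) (F b) := by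
    intro b
    by_cases hc : F b ≤ T b
    · have : g b = true := by simp [hg, hc]
      rw [this]
      have : min (T b) (F b) = F b := by omega
      rw [this]
      simp [hFdef, Bool.not_eq_true]
    · have : g b = false := by simp [hg, hc]
      rw [this]
      have : min (T b) (F b) = T b := by omega
      rw [this]
      simp [hTdef]
  -- key bound per b
  have hkeyb : ∀ b, 2 * (Finset.univ.filter fun x => fb b x ≠ g b).card
      ≤ ∑ i ∈ Finset.univ.erase j, 2 * (Finset.univ.filter fun x => PivotalAt f i x).card := by
    intro b
    rw [hmin b]
    calc 2 * min (T b) (F b) ≤ ∑ i, (Finset.univ.filter fun x => PivotalAt (fb b) i x).card :=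
          key n (fb b)
      _ = ∑ i ∈ Finset.univ.erase j, (Finset.univ.filter fun x => PivotalAt (fb b) i x).card := by
          rw [← Finset.add_sum_erase _ _ (Finset.mem_univ j), hPj b, zero_add]
      _ ≤ _ := Finset.sum_le_sum fun i hi => hPi b i (Finset.ne_of_mem_erase hi)
  -- split the error set by x j
  have hsplit : (Finset.univ.filter fun x : Fin n → Bool => f x ≠ g (x j)).card
      ≤ (Finset.univ.filter fun x => fb false x ≠ g false).card
        + (Finset.univ.filter fun x => fb true x ≠ g true).card := by
    have hsub : (Finset.univ.filter fun x : Fin n → Bool => f x ≠ g (x j))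
        ⊆ (Finset.univ.filter fun x => fb false x ≠ g false)
          ∪ (Finset.univ.filter fun x => fb true x ≠ g true) := by
      intro x hx
      simp only [Finset.mem_filter, Finset.mem_univ, true_and] at hx
      simp only [Finset.mem_union, Finset.mem_filter, Finset.mem_univ, true_and]
      have hfx : fb (x j) x = f x := by rw [hfb]; simp only [update_self']
      cases hb : x j with
      | false => left; rw [← hb, hfx]; rw [hb] at hx ⊢; exact hx
      | true => right; rw [← hb, hfx]; rw [hb] at hx ⊢; exact hx
    calc _ ≤ _ := Finset.card_le_card hsub
      _ ≤ _ := Finset.card_union_le _ _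
  -- combine in ℕ
  have hnat : (Finset.univ.filter fun x : Fin n → Bool => f x ≠ g (x j)).card
      ≤ 2 * ∑ i ∈ Finset.univ.erase j, (Finset.univ.filter fun x => PivotalAt f i x).card := by
    have h0 := hkeyb false
    have h1 := hkeyb true
    have hs : ∑ i ∈ Finset.univ.erase j,
        2 * (Finset.univ.filter fun x => PivotalAt f i x).card
        = 2 * ∑ i ∈ Finset.univ.erase j,
            (Finset.univ.filter fun x => PivotalAt f i x).card :=
      (Finset.mul_sum _ _ _).symm
    rw [hs] at h0
    rw [hs] at h1
    refine hsplit.trans (Nat.le_of_mul_le_mul_left ?_ two_pos)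
    calc 2 * ((Finset.univ.filter fun x => fb false x ≠ g false).card
          + (Finset.univ.filter fun x => fb true x ≠ g true).card)
        = 2 * (Finset.univ.filter fun x => fb false x ≠ g false).card
          + 2 * (Finset.univ.filter fun x => fb true x ≠ g true).card := by ring
      _ ≤ 2 * ∑ i ∈ Finset.univ.erase j,
            (Finset.univ.filter fun x => PivotalAt f i x).card
          + 2 * ∑ i ∈ Finset.univ.erase j,
            (Finset.univ.filter fun x => PivotalAt f i x).card := add_le_add h0 h1
      _ = 2 * (2 * ∑ i ∈ Finset.univ.erase j,
            (Finset.univ.filter fun x => PivotalAt f i x).card) := by ring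
  -- pass to ℝ
  have h2n : (0:ℝ) < 2 ^ n := by positivity
  have hcast : ((Finset.univ.filter fun x : Fin n → Bool => f x ≠ g (x j)).card : ℝ) / 2^n
      ≤ 2 * ∑ i ∈ Finset.univ.erase j, influence f i := by
    rw [div_le_iff₀ h2n]
    calc ((Finset.univ.filter fun x : Fin n → Bool => f x ≠ g (x j)).card : ℝ)
        ≤ 2 * ∑ i ∈ Finset.univ.erase j,
            ((Finset.univ.filter fun x => PivotalAt f i x).card : ℝ) := by
          exact_mod_cast hnat
      _ = (2 * ∑ i ∈ Finset.univ.erase j, influence f i) * 2 ^ n := by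
          have hi : ∀ i : Fin n, influence f i * 2 ^ n
              = ((Finset.univ.filter fun x => PivotalAt f i x).card : ℝ) := by
            intro i
            unfold influence
            rw [div_mul_cancel₀]
            positivity
          rw [mul_assoc, Finset.sum_mul]
          congr 1
          exact Finset.sum_congr rfl fun i _ => (hi i).symm
  refine hcast.trans ?_
  have hn1 : (1:ℝ) ≤ (n:ℝ) := by
    have : 0 < n := Fin.pos j
    exact_mod_cast this
  have hnpos : (0:ℝ) < n := by linarith
  have hsumle : ∑ i ∈ Finset.univ.erase j, influence f i
      ≤ ∑ _i ∈ Finset.univ.erase j, (ε / n) :=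
    Finset.sum_le_sum fun i hi => hinf i (Finset.ne_of_mem_erase hi)
  have hcard : (Finset.univ.erase j).card = n - 1 := by
    rw [Finset.card_erase_of_mem (Finset.mem_univ j), Finset.card_univ, Fintype.card_fin]
  have hfin : ∑ _i ∈ Finset.univ.erase j, (ε / n) ≤ ε := by
    rw [Finset.sum_const, hcard, nsmul_eq_mul]
    have h1 : ((n - 1 : ℕ) : ℝ) ≤ (n:ℝ) := by
      have : ((n - 1 : ℕ) : ℝ) ≤ ((n : ℕ) : ℝ) := by exact_mod_cast Nat.sub_le n 1
      simpa using this
    have h2 : (0:ℝ) ≤ ε / n := div_nonneg hε (le_of_lt hnpos)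
    calc ((n - 1 : ℕ) : ℝ) * (ε / n) ≤ (n:ℝ) * (ε / n) := by
          exact mul_le_mul_of_nonneg_right h1 h2
      _ = ε := by field_simp
  linarith [hsumle, hfin]
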